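/- Let n and k be integers with k ≥ 1 and n − k ≥ 3, and let G ∈ 𝕍_{n,k}. Then M₁(G) ≥ 4n + 2, with equality if and only if G is isomorphic to C_{n,k}. -/

import Mathlib

open scoped Classical

/-- The first Zagreb index: the sum of the squares of the vertex degrees. -/
noncomputable def zagrebM1 {V : Type*} [Fintype V] (G : SimpleGraph V) : ℕ :=
  ∑ v : V, G.degree v ^ 2

/-- `v` is a cut vertex of `G`: deleting `v` disconnects the graph. -/
def IsCutVertex {V : Type*} (G : SimpleGraph V) (v : V) : Prop :=
  ¬ (SimpleGraph.induce {u : V | u ≠ v} G).Connected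

/-- `G` belongs to `𝕍_{n,k}` (with `n` the cardinality of the vertex type):
`G` is connected, has exactly `k` cut vertices, and contains at least one
cycle. -/
def MemVnk {V : Type*} (G : SimpleGraph V) (k : ℕ) : Prop :=
  G.Connected ∧ {v : V | IsCutVertex G v}.ncard = k ∧
    ∃ (x : V) (c : G.Walk x x), c.IsCycle

/-- The graph `C_{n,k}` on `n` vertices: the cycle on the `n - k` vertices
`k, k+1, …, n-1` together with a pendant path `0 – 1 – ⋯ – k` (with `k` edges
and `k` vertices off the cycle) attached at the cycle vertex `k`. Its edges are
those of the Hamiltonian path `0 – 1 – ⋯ – (n-1)` together with the edge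
joining `k` and `n-1`. -/
def cnk (n k : ℕ) : SimpleGraph (Fin n) :=
  SimpleGraph.fromEdgeSet
    ({e | ∃ i j : Fin n, (j : ℕ) = (i : ℕ) + 1 ∧ e = s(i, j)}
      ∪ {e | ∃ i j : Fin n, (i : ℕ) = k ∧ (j : ℕ) = n - 1 ∧ e = s(i, j)})

open SimpleGraph Finset

lemma walk_closed {V : Type*} {G : SimpleGraph V} (S : Set V)
    (hcl : ∀ ⦃u w⦄, u ∈ S → G.Adj u w → w ∈ S) {a b : V} (p : G.Walk a b) (ha : a ∈ S) :
    b ∈ S := by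
  induction p with
  | nil => exact ha
  | cons h p ih => exact ih (hcl ha h)

lemma closed_eq_univ {V : Type*} {G : SimpleGraph V} (hconn : G.Connected) {S : Set V} {x : V}
    (hx : x ∈ S) (hcl : ∀ ⦃u w⦄, u ∈ S → G.Adj u w → w ∈ S) : ∀ v, v ∈ S := fun v =>
  walk_closed S hcl (hconn.preconnected x v).some hx

lemma one_le_degree {V : Type*} [Fintype V] {G : SimpleGraph V} (hconn : G.Connected)
    (hcard : 2 ≤ Fintype.card V) (v : V) : 1 ≤ G.degree v := by
  rw [Nat.one_le_iff_ne_zero]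
  intro h0
  have hno : ∀ w, ¬ G.Adj v w := by
    intro w hw
    have hmem : w ∈ G.neighborFinset v := by simpa using hw
    have hemp : G.neighborFinset v = ∅ := Finset.card_eq_zero.1 h0
    rw [hemp] at hmem
    exact absurd hmem (Finset.notMem_empty w)
  have hall : ∀ u, u ∈ ({v} : Set V) := by
    refine closed_eq_univ hconn rfl ?_
    rintro u w (rfl : u = v) hadj
    exact absurd hadj (hno w)
  have : Fintype.card V ≤ 1 := Fintype.card_le_one_iff.2 fun a b => by
    have ha := hall a; have hb := hall b
    simp only [Set.mem_singleton_iff] at ha hb; rw [ha, hb]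
  omega

lemma two_le_degree_of_adj {V : Type*} [Fintype V] {G : SimpleGraph V} {v a b : V}
    (hab : a ≠ b) (ha : G.Adj v a) (hb : G.Adj v b) : 2 ≤ G.degree v := by
  rw [← SimpleGraph.card_neighborFinset_eq_degree]
  have : ({a, b} : Finset V) ⊆ G.neighborFinset v := by
    intro t ht; simp at ht; rcases ht with rfl | rfl <;> simp_all
  calc 2 = ({a,b} : Finset V).card := by rw [Finset.card_insert_of_notMem (by simpa using hab), Finset.card_singleton]
  _ ≤ _ := Finset.card_le_card this

lemma three_le_degree_of_adj {V : Type*} [Fintype V] {G : SimpleGraph V} {v a b c : V}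
    (hab : a ≠ b) (hac : a ≠ c) (hbc : b ≠ c) (ha : G.Adj v a) (hb : G.Adj v b) (hc : G.Adj v c) :
    3 ≤ G.degree v := by
  rw [← SimpleGraph.card_neighborFinset_eq_degree]
  have hsub : ({a, b, c} : Finset V) ⊆ G.neighborFinset v := by
    intro t ht; simp at ht; rcases ht with rfl | rfl | rfl <;> simp_all
  have : ({a,b,c} : Finset V).card = 3 := by
    rw [Finset.card_insert_of_notMem (by simp [hab, hac]), Finset.card_insert_of_notMem (by simpa using hbc), Finset.card_singleton]
  calc 3 = ({a,b,c} : Finset V).card := this.symm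
  _ ≤ _ := Finset.card_le_card hsub

lemma neighborFinset_eq {V : Type*} [Fintype V] {G : SimpleGraph V} {v : V} {s : Finset V}
    (hs : s ⊆ G.neighborFinset v) (hcard : G.degree v ≤ s.card) : G.neighborFinset v = s :=
  (Finset.eq_of_subset_of_card_le hs (by rwa [SimpleGraph.card_neighborFinset_eq_degree])).symm

lemma chain_reachable {V : Type*} {H : SimpleGraph V} (w : ℕ → V) (a : ℕ) :
    ∀ b, a ≤ b → (∀ s, a ≤ s → s < b → H.Adj (w s) (w (s+1))) → H.Reachable (w a) (w b) := by
  intro b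
  induction b with
  | zero => intro h _; have : a = 0 := by omega
            rw [this]
  | succ b ih =>
    intro hab hadj
    rcases Nat.lt_or_ge a (b+1) with h | h
    · have hab' : a ≤ b := by omega
      exact (ih hab' fun s h1 h2 => hadj s h1 (by omega)).trans
        (hadj b hab' (by omega)).reachable
    · have : a = b + 1 := by omega
      subst this; rfl


lemma two_edges_at {V : Type*} {G : SimpleGraph V} {z : V} (d : G.Walk z z) (hd : d.IsCycle) :
    ∃ b w, G.Adj z b ∧ G.Adj z w ∧ b ≠ w ∧ b ∈ d.support ∧ w ∈ d.support := by
  cases d with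
  | nil => exact absurd hd.three_le_length (by simp)
  | @cons _ b _ h q =>
    have hq3 : 2 ≤ q.length := by
      have := hd.three_le_length
      simp only [SimpleGraph.Walk.length_cons] at this
      omega
    have hqrev : q.reverse.length = q.length := SimpleGraph.Walk.length_reverse q
    generalize hqr : q.reverse = r at hqrev
    cases r with
    | nil => simp at hqrev; omega
    | @cons _ w _ h₂ r' =>
      have hmem : s(z, w) ∈ q.edges := by
        have h5 : s(z,w) ∈ q.reverse.edges := by rw [hqr]; simp
        rwa [SimpleGraph.Walk.edges_reverse, List.mem_reverse] at h5
      have hne : s(z,b) ∉ q.edges := by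
        have h6 := hd.edges_nodup
        rw [SimpleGraph.Walk.edges_cons] at h6
        exact (List.nodup_cons.1 h6).1
      have hbw : b ≠ w := by
        rintro rfl
        exact hne hmem
      have hwsup : w ∈ q.support := by
        have h7 : w ∈ q.reverse.support := by
          rw [hqr]
          simp [SimpleGraph.Walk.support_cons, SimpleGraph.Walk.start_mem_support]
        rwa [SimpleGraph.Walk.support_reverse, List.mem_reverse] at h7
      exact ⟨b, w, h, h₂, hbw, by simp [SimpleGraph.Walk.support_cons, SimpleGraph.Walk.start_mem_support],
        by simp [SimpleGraph.Walk.support_cons, hwsup]⟩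


lemma card_le_edges {V : Type*} [Fintype V] {G : SimpleGraph V} (hconn : G.Connected)
    {x : V} {c : G.Walk x x} (hc : c.IsCycle) : Fintype.card V ≤ G.edgeFinset.card := by
  -- parent choice
  have hpar : ∀ v : V, ∃ w, v ≠ x → (G.Adj w v ∧ G.dist x w + 1 = G.dist x v) := by
    intro v
    by_cases hv : v = x
    · exact ⟨x, fun h => absurd hv h⟩
    obtain ⟨p, hp⟩ := hconn.exists_walk_length_eq_dist x v
    have hq : p.reverse.length = G.dist x v := by rw [SimpleGraph.Walk.length_reverse, hp]
    generalize hpr : p.reverse = q at hq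
    cases q with
    | nil => exact absurd rfl hv
    | @cons _ w _ h q' =>
      refine ⟨w, fun _ => ⟨h.symm, ?_⟩⟩
      have h1 : G.dist x w ≤ q'.reverse.length := SimpleGraph.dist_le _
      rw [SimpleGraph.Walk.length_reverse] at h1
      have h2 : G.dist x v ≤ G.dist x w + G.dist w v := hconn.dist_triangle
      have h3 : G.dist w v ≤ 1 := by
        have := SimpleGraph.dist_le (SimpleGraph.Walk.cons h.symm SimpleGraph.Walk.nil : G.Walk w v)
        simpa using this
      simp only [SimpleGraph.Walk.length_cons] at hq
      omega
  choose pr hpr using hpar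
  -- the maximal-distance vertex on the cycle
  have hsupne : c.support.toFinset.Nonempty := ⟨x, by simp [SimpleGraph.Walk.start_mem_support]⟩
  obtain ⟨z, hzmem, hzmax⟩ := Finset.exists_max_image c.support.toFinset (fun a => G.dist x a) hsupne
  rw [List.mem_toFinset] at hzmem
  have hzmax' : ∀ a ∈ c.support, G.dist x a ≤ G.dist x z := fun a ha =>
    hzmax a (List.mem_toFinset.2 ha)
  -- rotate the cycle to be based at z
  set c' := c.rotate z hzmem with hc'def
  have hc' : c'.IsCycle := hc.rotate hzmem
  have hsup : ∀ a, a ∈ c'.support → a ∈ c.support := by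
    intro a ha
    rw [SimpleGraph.Walk.support_eq_cons c'] at ha
    rcases ha with _ | ha
    · exact hzmem
    · exact List.mem_of_mem_tail <| ((SimpleGraph.Walk.support_rotate c z hzmem).mem_iff).1 (by assumption)
  have hedg : ∀ e, e ∈ c'.edges → e ∈ c.edges := fun e he =>
    ((SimpleGraph.Walk.rotate_edges c z hzmem).mem_iff).1 he

  obtain ⟨b, w, hzb, hzw, hbw, hbs, hws⟩ := two_edges_at c' hc'
  have hbs' : b ∈ c.support := hsup b hbs
  have hws' : w ∈ c.support := hsup w hws
  -- find a cycle edge at z that is not a parent edge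
  have hgood : ∃ g, g ∈ G.edgeSet ∧ ∀ v, v ≠ x → g ≠ s(pr v, v) := by
    have hkey : ∀ u, u ∈ c.support → G.Adj z u → ∀ v, v ≠ x → s(z, u) = s(pr v, v) → v = z := by
      intro u hu hadj v hvx heq
      rw [Sym2.eq_iff] at heq
      rcases heq with ⟨hz1, hu1⟩ | ⟨hz1, hu1⟩
      · exfalso
        have hdv := (hpr v hvx).2
        rw [← hz1] at hdv
        have h8 := hzmax' u hu
        rw [hu1] at h8
        omega
      · exact hz1.symm
    by_cases hcase : ∀ v, v ≠ x → s(z, b) ≠ s(pr v, v)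
    · exact ⟨s(z,b), by rwa [SimpleGraph.mem_edgeSet], hcase⟩
    · push_neg at hcase
      obtain ⟨v₁, hv₁x, heq₁⟩ := hcase
      have hv₁z : v₁ = z := hkey b hbs' hzb v₁ hv₁x heq₁
      refine ⟨s(z,w), by rwa [SimpleGraph.mem_edgeSet], ?_⟩
      intro v hvx heq₂
      have hvz : v = z := hkey w hws' hzw v hvx heq₂
      rw [hvz] at heq₂
      rw [hv₁z] at heq₁
      rw [← heq₂] at heq₁
      rw [Sym2.eq_iff] at heq₁
      rcases heq₁ with ⟨-, h1⟩ | ⟨h1, -⟩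
      · exact hbw h1
      · exact hzw.ne' h1.symm
  obtain ⟨g, hgE, hgne⟩ := hgood
  set F : V → Sym2 V := fun v => if v = x then g else s(pr v, v) with hF
  have hFmem : ∀ v ∈ Finset.univ, F v ∈ G.edgeFinset := by
    intro v _
    rw [SimpleGraph.mem_edgeFinset]
    by_cases hv : v = x
    · simp [hF, hv, hgE]
    · simp only [hF, if_neg hv]
      rw [SimpleGraph.mem_edgeSet]
      exact (hpr v hv).1
  have hFinj : Set.InjOn F (Finset.univ : Finset V) := by
    intro u _ v _ heq
    by_cases hu : u = x <;> by_cases hv : v = x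
    · rw [hu, hv]
    · exfalso
      simp only [hF, if_pos hu, if_neg hv] at heq
      exact hgne v hv heq
    · exfalso
      simp only [hF, if_neg hu, if_pos hv] at heq
      exact hgne u hu heq.symm
    · simp only [hF, if_neg hu, if_neg hv, Sym2.eq_iff] at heq
      rcases heq with ⟨-, h1⟩ | ⟨h1, h2⟩
      · exact h1
      · exfalso
        have d1 := (hpr u hu).2
        have d2 := (hpr v hv).2
        rw [h1] at d1
        rw [← h2] at d2
        omega
  calc Fintype.card V = Finset.univ.card := Finset.card_univ.symm
  _ ≤ G.edgeFinset.card := Finset.card_le_card_of_injOn F hFmem hFinj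


lemma not_all_deg_two {V : Type*} [Fintype V] {G : SimpleGraph V} (hconn : G.Connected)
    (hcard : 2 ≤ Fintype.card V) {c : V} (hcut : IsCutVertex G c) :
    ¬ (∀ u : V, G.degree u = 2) := by
  intro hdeg
  obtain ⟨u₀, hu₀⟩ := Fintype.exists_ne_of_one_lt_card (by omega) c
  have hVcne : Nonempty {u : V // u ≠ c} := ⟨⟨u₀, hu₀⟩⟩
  rw [IsCutVertex, SimpleGraph.connected_iff] at hcut
  push_neg at hcut
  have hnp : ¬ (SimpleGraph.induce {u : V | u ≠ c} G).Preconnected := by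
    intro hp; exact (hcut hp).false ⟨u₀, hu₀⟩
  rw [SimpleGraph.Preconnected] at hnp
  push_neg at hnp
  obtain ⟨x', y', hxy⟩ := hnp
  set Gc := SimpleGraph.induce {u : V | u ≠ c} G with hGc
  set A : Set V := Subtype.val '' {z : {u : V | u ≠ c} | Gc.Reachable x' z} with hA
  have hxA : (x' : V) ∈ A := ⟨x', SimpleGraph.Reachable.refl x', rfl⟩
  have hyA : (y' : V) ∉ A := by
    rintro ⟨z, hz, hzy⟩
    exact hxy (hz.trans (by rw [Subtype.ext hzy]))
  have hcA : c ∉ A := by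
    rintro ⟨z, _, hzc⟩
    exact z.2 hzc
  have hAcl : ∀ u ∈ A, ∀ w, G.Adj u w → w ≠ c → w ∈ A := by
    rintro u ⟨z, hz, rfl⟩ w hadj hwc
    refine ⟨⟨w, hwc⟩, hz.trans (SimpleGraph.Adj.reachable ?_), rfl⟩
    simpa [hGc] using hadj
  -- neighbours of c
  have hc2 : (G.neighborFinset c).card = 2 := by
    rw [SimpleGraph.card_neighborFinset_eq_degree]; exact hdeg c
  obtain ⟨a, b, hab, hNc⟩ := Finset.card_eq_two.1 hc2
  -- the main parity argument, assuming a ∈ A and b ∉ A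
  have final : ∀ a b : V, a ≠ b → G.neighborFinset c = {a, b} → a ∈ A → b ∉ A → False := by
    intro a b hab hNc haA hbA
    have hca : G.Adj c a := by
      rw [← SimpleGraph.mem_neighborFinset, hNc]; simp
    have hnadj : ∀ u ∈ A, u ≠ a → ¬ G.Adj c u := by
      intro u huA hua hadj
      have : u ∈ G.neighborFinset c := by rwa [SimpleGraph.mem_neighborFinset]
      rw [hNc] at this
      simp only [Finset.mem_insert, Finset.mem_singleton] at this
      rcases this with rfl | rfl
      · exact hua rfl
      · exact hbA huA
    -- auxiliary graph
    have hsymm : Symmetric (fun u w => G.Adj u w ∧ u ∈ A ∧ w ∈ A) :=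
      fun u w h => ⟨h.1.symm, h.2.2, h.2.1⟩
    set H : SimpleGraph V := ⟨fun u w => G.Adj u w ∧ u ∈ A ∧ w ∈ A, ⟨fun u w h => hsymm h⟩,
      ⟨fun u h => G.loopless.irrefl u h.1⟩⟩ with hH
    have hHadj : ∀ u w, H.Adj u w ↔ (G.Adj u w ∧ u ∈ A ∧ w ∈ A) := fun _ _ => Iff.rfl
    have hHdeg0 : ∀ u, u ∉ A → H.degree u = 0 := by
      intro u hu
      rw [← SimpleGraph.card_neighborFinset_eq_degree, Finset.card_eq_zero,
        Finset.eq_empty_iff_forall_notMem]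
      intro w hw
      rw [SimpleGraph.mem_neighborFinset, hHadj] at hw
      exact hu hw.2.1
    have hHnbr : ∀ u ∈ A, H.neighborFinset u = (G.neighborFinset u).erase c := by
      intro u hu
      ext w
      rw [SimpleGraph.mem_neighborFinset, Finset.mem_erase, SimpleGraph.mem_neighborFinset, hHadj]
      constructor
      · rintro ⟨h1, -, h3⟩
        exact ⟨fun hwc => hcA (hwc ▸ h3), h1⟩
      · rintro ⟨hwc, h1⟩
        exact ⟨h1, hu, hAcl u hu w h1 hwc⟩
    have hHdegA : ∀ u ∈ A, H.degree u = if G.Adj c u then 1 else 2 := by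
      intro u hu
      rw [← SimpleGraph.card_neighborFinset_eq_degree, hHnbr u hu]
      by_cases hadj : G.Adj c u
      · rw [if_pos hadj, Finset.card_erase_of_mem (by simpa using hadj.symm)]
        rw [SimpleGraph.card_neighborFinset_eq_degree, hdeg u]
      · rw [if_neg hadj, Finset.erase_eq_of_notMem
          (by simp only [SimpleGraph.mem_neighborFinset]; exact fun h => hadj h.symm)]
        rw [SimpleGraph.card_neighborFinset_eq_degree, hdeg u]
    set At : Finset V := Finset.univ.filter (· ∈ A) with hAt
    have haAt : a ∈ At := by simp [hAt, haA]
    have hsum : ∑ v, H.degree v = ∑ v ∈ At, H.degree v := by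
      refine (Finset.sum_subset (Finset.subset_univ At) ?_).symm
      intro x _ hx
      exact hHdeg0 x (by simpa [hAt] using hx)
    have hsplit : ∑ v ∈ At, H.degree v = H.degree a + ∑ v ∈ At.erase a, H.degree v := by
      rw [← Finset.sum_erase_add At _ haAt]; ring
    have hdega : H.degree a = 1 := by rw [hHdegA a haA, if_pos hca]
    have hdegrest : ∀ v ∈ At.erase a, H.degree v = 2 := by
      intro v hv
      rw [Finset.mem_erase] at hv
      have hvA : v ∈ A := by simpa [hAt] using hv.2
      rw [hHdegA v hvA, if_neg (hnadj v hvA hv.1)]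
    have hsum2 : ∑ v ∈ At.erase a, H.degree v = 2 * (At.erase a).card := by
      rw [Finset.sum_congr rfl hdegrest]
      simp [mul_comm]
    have heven := H.sum_degrees_eq_twice_card_edges
    rw [hsum, hsplit, hdega, hsum2] at heven
    omega
  -- one of a, b is in A, the other not
  by_cases haA : a ∈ A <;> by_cases hbA : b ∈ A
  · -- both in A : A ∪ {c} is closed
    have hclosed : ∀ ⦃u w⦄, u ∈ A ∪ {c} → G.Adj u w → w ∈ A ∪ {c} := by
      rintro u w (hu | rfl) hadj
      · by_cases hwc : w = c
        · exact Or.inr hwc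
        · exact Or.inl (hAcl u hu w hadj hwc)
      · have : w ∈ G.neighborFinset u := by rwa [SimpleGraph.mem_neighborFinset]
        rw [hNc] at this
        simp only [Finset.mem_insert, Finset.mem_singleton] at this
        rcases this with rfl | rfl
        · exact Or.inl haA
        · exact Or.inl hbA
    have := closed_eq_univ hconn (Or.inl hxA) hclosed (y' : V)
    rcases this with h | h
    · exact hyA h
    · exact y'.2 h
  · exact final a b hab hNc haA hbA
  · exact final b a hab.symm (by rw [hNc, Finset.pair_comm]) hbA haA
  · -- neither in A : A is closed
    have hclosed : ∀ ⦃u w⦄, u ∈ A → G.Adj u w → w ∈ A := by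
      intro u w hu hadj
      by_cases hwc : w = c
      · exfalso
        subst hwc
        have : u ∈ G.neighborFinset w := by simpa using hadj.symm
        rw [hNc] at this
        simp only [Finset.mem_insert, Finset.mem_singleton] at this
        rcases this with rfl | rfl
        · exact haA hu
        · exact hbA hu
      · exact hAcl u hu w hadj hwc
    exact hcA (closed_eq_univ hconn hxA hclosed c)


noncomputable def gnext {V : Type*} (G : SimpleGraph V) (a b : V) : V :=
  if h : ∃ w, G.Adj b w ∧ w ≠ a then h.choose else b

noncomputable def gpair {V : Type*} (G : SimpleGraph V) (p : V) (i : ℕ) : V × V :=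
  (fun pr => (pr.2, gnext G pr.1 pr.2))^[i] (p, p)

noncomputable def gv {V : Type*} (G : SimpleGraph V) (p : V) (i : ℕ) : V := (gpair G p i).2

lemma gpair_zero {V : Type*} (G : SimpleGraph V) (p : V) : gpair G p 0 = (p, p) := rfl

lemma gv_zero {V : Type*} (G : SimpleGraph V) (p : V) : gv G p 0 = p := rfl

lemma gpair_succ {V : Type*} (G : SimpleGraph V) (p : V) (i : ℕ) :
    gpair G p (i+1) = ((gpair G p i).2, gnext G (gpair G p i).1 (gpair G p i).2) := by
  rw [gpair, Function.iterate_succ_apply', ← gpair]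

lemma gpair_fst {V : Type*} (G : SimpleGraph V) (p : V) (i : ℕ) :
    (gpair G p (i+1)).1 = gv G p i := by rw [gpair_succ]; rfl

lemma gv_succ {V : Type*} (G : SimpleGraph V) (p : V) (i : ℕ) :
    gv G p (i+1) = gnext G (gpair G p i).1 (gv G p i) := by
  rw [gv, gpair_succ]; rfl

lemma gnext_spec {V : Type*} {G : SimpleGraph V} {a b : V} (h : ∃ w, G.Adj b w ∧ w ≠ a) :
    G.Adj b (gnext G a b) ∧ gnext G a b ≠ a := by
  rw [gnext, dif_pos h]; exact h.choose_spec

lemma exists_next {V : Type*} [Fintype V] {G : SimpleGraph V} {b : V}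
    (hdeg : 2 ≤ G.degree b) (a : V) : ∃ w, G.Adj b w ∧ w ≠ a := by
  have hne : ((G.neighborFinset b).erase a).Nonempty := by
    rw [← Finset.card_pos]
    have h1 : (G.neighborFinset b).card - 1 ≤ ((G.neighborFinset b).erase a).card :=
      Finset.pred_card_le_card_erase
    rw [SimpleGraph.card_neighborFinset_eq_degree] at h1
    omega
  obtain ⟨w, hw⟩ := hne
  rw [Finset.mem_erase, SimpleGraph.mem_neighborFinset] at hw
  exact ⟨w, hw.2, hw.1⟩

lemma exists_next0 {V : Type*} [Fintype V] {G : SimpleGraph V} {b : V}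
    (hdeg : 1 ≤ G.degree b) : ∃ w, G.Adj b w ∧ w ≠ b := by
  have hne : (G.neighborFinset b).Nonempty := by
    rw [← Finset.card_pos, SimpleGraph.card_neighborFinset_eq_degree]; omega
  obtain ⟨w, hw⟩ := hne
  rw [SimpleGraph.mem_neighborFinset] at hw
  exact ⟨w, hw, hw.ne'⟩


lemma gv_chain {V : Type*} [Fintype V] {G : SimpleGraph V} (hconn : G.Connected)
    {p q : V} (hp : G.degree p = 1) (hq : G.degree q = 3)
    (hother : ∀ u, u ≠ p → u ≠ q → G.degree u = 2) (hcard : 4 ≤ Fintype.card V) :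
    ∀ i, i ≤ Fintype.card V - 1 →
      (∀ j, j < i → G.Adj (gv G p j) (gv G p (j+1))) ∧
      (∀ j1 j2, j1 < j2 → j2 ≤ i → gv G p j1 ≠ gv G p j2) := by
  have hpdeg2 : ∀ u, u ≠ p → 2 ≤ G.degree u := by
    intro u hu
    by_cases h : u = q
    · rw [h, hq]; omega
    · rw [hother u hu h]
  intro i
  induction i with
  | zero =>
    intro _
    exact ⟨fun j hj => absurd hj (Nat.not_lt_zero j),
      fun j1 j2 h1 h2 => absurd (lt_of_lt_of_le h1 h2) (Nat.not_lt_zero j1)⟩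
  | succ i ih =>
    intro hi1
    obtain ⟨hadj, hinj⟩ := ih (by omega)
    have hinj' : ∀ a b, a ≠ b → a ≤ i → b ≤ i → gv G p a ≠ gv G p b := by
      intro a b hab ha hb
      rcases Nat.lt_or_ge a b with h | h
      · exact hinj a b h hb
      · exact (hinj b a (by omega) ha).symm
    have hstep : G.Adj (gv G p i) (gv G p (i+1)) ∧ gv G p (i+1) ≠ (gpair G p i).1 := by
      rw [gv_succ]
      apply gnext_spec
      cases i with
      | zero =>
        rw [gpair_zero]
        exact exists_next0 (by rw [gv_zero, hp])
      | succ t =>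
        have hne : gv G p (t+1) ≠ p := by
          intro h
          exact hinj 0 (t+1) (by omega) (le_refl _) (by rw [gv_zero, h])
        exact exists_next (hpdeg2 _ hne) _
    refine ⟨?_, ?_⟩
    · intro j hj
      rcases Nat.lt_or_ge j i with h | h
      · exact hadj j h
      · have : j = i := by omega
        subst this; exact hstep.1
    · intro j1 j2 h12 h2i
      rcases Nat.lt_or_ge j2 (i+1) with h | h
      · exact hinj j1 j2 h12 (by omega)
      · have hj2 : j2 = i + 1 := by omega
        subst hj2
        intro heq
        rcases Nat.lt_or_ge j1 i with hj1i | hj1i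
        swap
        · have : j1 = i := by omega
          subst this
          exact hstep.1.ne heq
        cases i with
        | zero => omega
        | succ t =>
          rcases Nat.lt_or_ge j1 t with hj1t | hj1t
          swap
          · have h2 := hstep.2
            rw [gpair_fst] at h2
            have : j1 = t := by omega
            subst this
            exact h2 heq.symm
          -- now j1 < t, j1 ≤ t - 1; gv j1 = gv (t+2)
          have hiadj : G.Adj (gv G p (t+1)) (gv G p j1) := by
            rw [heq]; exact hstep.1
          rcases Nat.eq_zero_or_pos j1 with rfl | hj1pos
          · -- p would have two distinct neighbours
            have h1 : G.Adj (gv G p 0) (gv G p 1) := hadj 0 (by omega)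
            have h2 : G.Adj (gv G p 0) (gv G p (t+1)) := hiadj.symm
            have hne : gv G p 1 ≠ gv G p (t+1) := hinj 1 (t+1) (by omega) (le_refl _)
            have := two_le_degree_of_adj hne h1 h2
            rw [gv_zero, hp] at this
            omega
          obtain ⟨s, rfl⟩ : ∃ s, j1 = s + 1 := ⟨j1 - 1, by omega⟩
          have hq1 : gv G p (s+1) = q := by
            by_contra hne
            have hd : G.degree (gv G p (s+1)) ≤ 2 := by
              by_cases hpp : gv G p (s+1) = p
              · rw [hpp, hp]; omega
              · rw [hother _ hpp hne]
            have ha1 : G.Adj (gv G p (s+1)) (gv G p s) := (hadj s (by omega)).symm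
            have ha2 : G.Adj (gv G p (s+1)) (gv G p (s+2)) := hadj (s+1) (by omega)
            have ha3 : G.Adj (gv G p (s+1)) (gv G p (t+1)) := hiadj.symm
            have hd3 := three_le_degree_of_adj
              (hinj' s (s+2) (by omega) (by omega) (by omega))
              (hinj' s (t+1) (by omega) (by omega) (by omega))
              (hinj' (s+2) (t+1) (by omega) (by omega) (by omega))
              ha1 ha2 ha3
            omega
          -- closure contradiction
          have hqne_p : q ≠ p := by intro h; rw [h, hp] at hq; omega
          set S : Set V := {u | ∃ r, r ≤ t + 1 ∧ gv G p r = u} with hS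
          have hpS : p ∈ S := ⟨0, by omega, gv_zero G p⟩
          have hclosed : ∀ ⦃u w⦄, u ∈ S → G.Adj u w → w ∈ S := by
            rintro u w ⟨r, hr, rfl⟩ hadj'
            have hwmem : w ∈ G.neighborFinset (gv G p r) := by
              rwa [SimpleGraph.mem_neighborFinset]
            by_cases hr0 : r = 0
            · subst hr0
              have hN : G.neighborFinset (gv G p 0) = {gv G p 1} := by
                refine neighborFinset_eq ?_ ?_
                · rw [Finset.singleton_subset_iff, SimpleGraph.mem_neighborFinset]
                  exact hadj 0 (by omega)
                · rw [gv_zero, hp, Finset.card_singleton]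
              rw [hN, Finset.mem_singleton] at hwmem
              exact ⟨1, by omega, hwmem.symm⟩
            by_cases hrj : r = s + 1
            · subst hrj
              have hN : G.neighborFinset (gv G p (s+1)) =
                  {gv G p s, gv G p (s+2), gv G p (t+1)} := by
                refine neighborFinset_eq ?_ ?_
                · intro x hx
                  simp only [Finset.mem_insert, Finset.mem_singleton] at hx
                  rw [SimpleGraph.mem_neighborFinset]
                  rcases hx with rfl | rfl | rfl
                  · exact (hadj s (by omega)).symm
                  · exact hadj (s+1) (by omega)
                  · exact hiadj.symm
                · rw [hq1, hq]
                  rw [Finset.card_insert_of_notMem, Finset.card_insert_of_notMem,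
                    Finset.card_singleton]
                  · simp only [Finset.mem_singleton]
                    exact hinj' (s+2) (t+1) (by omega) (by omega) (by omega)
                  · simp only [Finset.mem_insert, Finset.mem_singleton]
                    push_neg
                    exact ⟨hinj' s (s+2) (by omega) (by omega) (by omega),
                      hinj' s (t+1) (by omega) (by omega) (by omega)⟩
              rw [hN] at hwmem
              simp only [Finset.mem_insert, Finset.mem_singleton] at hwmem
              rcases hwmem with rfl | rfl | rfl
              · exact ⟨s, by omega, rfl⟩
              · exact ⟨s+2, by omega, rfl⟩
              · exact ⟨t+1, by omega, rfl⟩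
            by_cases hrt : r = t + 1
            · subst hrt
              have hN : G.neighborFinset (gv G p (t+1)) = {gv G p t, gv G p (s+1)} := by
                refine neighborFinset_eq ?_ ?_
                · intro x hx
                  simp only [Finset.mem_insert, Finset.mem_singleton] at hx
                  rw [SimpleGraph.mem_neighborFinset]
                  rcases hx with rfl | rfl
                  · exact (hadj t (by omega)).symm
                  · exact hiadj
                · have hnp : gv G p (t+1) ≠ p := by
                    rw [← gv_zero G p]
                    exact (hinj' 0 (t+1) (by omega) (by omega) (by omega)).symm
                  have hnq : gv G p (t+1) ≠ q := by
                    rw [← hq1]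
                    exact (hinj' (s+1) (t+1) (by omega) (by omega) (by omega)).symm
                  rw [hother _ hnp hnq]
                  rw [Finset.card_insert_of_notMem, Finset.card_singleton]
                  simp only [Finset.mem_singleton]
                  exact hinj' t (s+1) (by omega) (by omega) (by omega)
              rw [hN] at hwmem
              simp only [Finset.mem_insert, Finset.mem_singleton] at hwmem
              rcases hwmem with rfl | rfl
              · exact ⟨t, by omega, rfl⟩
              · exact ⟨s+1, by omega, rfl⟩
            · obtain ⟨r', rfl⟩ : ∃ r', r = r' + 1 := ⟨r - 1, by omega⟩
              have hN : G.neighborFinset (gv G p (r'+1)) = {gv G p r', gv G p (r'+2)} := by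
                refine neighborFinset_eq ?_ ?_
                · intro x hx
                  simp only [Finset.mem_insert, Finset.mem_singleton] at hx
                  rw [SimpleGraph.mem_neighborFinset]
                  rcases hx with rfl | rfl
                  · exact (hadj r' (by omega)).symm
                  · exact hadj (r'+1) (by omega)
                · have hnp : gv G p (r'+1) ≠ p := by
                    rw [← gv_zero G p]
                    exact (hinj' 0 (r'+1) (by omega) (by omega) (by omega)).symm
                  have hnq : gv G p (r'+1) ≠ q := by
                    rw [← hq1]
                    exact hinj' (r'+1) (s+1) (by omega) (by omega) (by omega)
                  rw [hother _ hnp hnq]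
                  rw [Finset.card_insert_of_notMem, Finset.card_singleton]
                  simp only [Finset.mem_singleton]
                  exact hinj' r' (r'+2) (by omega) (by omega) (by omega)
              rw [hN] at hwmem
              simp only [Finset.mem_insert, Finset.mem_singleton] at hwmem
              rcases hwmem with rfl | rfl
              · exact ⟨r', by omega, rfl⟩
              · exact ⟨r'+2, by omega, rfl⟩
          have hall := closed_eq_univ hconn hpS hclosed
          have hsub : Finset.univ ⊆ (Finset.range (t+2)).image (gv G p) := by
            intro v _
            obtain ⟨r, hr, hrv⟩ := hall v
            exact Finset.mem_image.2 ⟨r, Finset.mem_range.2 (by omega), hrv⟩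
          have hcard2 := Finset.card_le_card hsub
          rw [Finset.card_univ] at hcard2
          have hcard3 := Finset.card_image_le (s := Finset.range (t+2)) (f := gv G p)
          rw [Finset.card_range] at hcard3
          omega


lemma gv_struct {V : Type*} [Fintype V] {G : SimpleGraph V} (hconn : G.Connected)
    {p q : V} (hp : G.degree p = 1) (hq : G.degree q = 3)
    (hother : ∀ u, u ≠ p → u ≠ q → G.degree u = 2) (hcard : 4 ≤ Fintype.card V) :
    ∃ ℓ, 1 ≤ ℓ ∧ ℓ + 3 ≤ Fintype.card V ∧ gv G p ℓ = q ∧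
    (∀ j, j < Fintype.card V - 1 → G.Adj (gv G p j) (gv G p (j+1))) ∧
    (∀ a b, a ≠ b → a ≤ Fintype.card V - 1 → b ≤ Fintype.card V - 1 →
      gv G p a ≠ gv G p b) ∧
    (∀ v, ∃ t, t ≤ Fintype.card V - 1 ∧ gv G p t = v) ∧
    G.Adj (gv G p (Fintype.card V - 1)) q := by
  have hpdeg2 : ∀ u, u ≠ p → 2 ≤ G.degree u := by
    intro u hu
    by_cases h : u = q
    · rw [h, hq]; omega
    · rw [hother u hu h]
  set n := Fintype.card V with hn
  obtain ⟨hadj, hinj0⟩ := gv_chain hconn hp hq hother hcard (n-1) (le_refl _)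
  have hinj' : ∀ a b, a ≠ b → a ≤ n-1 → b ≤ n-1 → gv G p a ≠ gv G p b := by
    intro a b hab ha hb
    rcases Nat.lt_or_ge a b with h | h
    · exact hinj0 a b h hb
    · exact (hinj0 b a (by omega) ha).symm
  -- surjectivity
  have hsurj : ∀ v, ∃ t, t ≤ n - 1 ∧ gv G p t = v := by
    have himg : (Finset.range n).image (gv G p) = Finset.univ := by
      apply Finset.eq_univ_of_card
      rw [Finset.card_image_of_injOn, Finset.card_range]
      intro a ha b hb hab
      by_contra hne
      exact hinj' a b hne (by simp only [Finset.coe_range, Set.mem_Iio] at ha; omega)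
        (by simp only [Finset.coe_range, Set.mem_Iio] at hb; omega) hab
    intro v
    have : v ∈ (Finset.range n).image (gv G p) := by rw [himg]; exact Finset.mem_univ v
    obtain ⟨t, ht, htv⟩ := Finset.mem_image.1 this
    exact ⟨t, by rw [Finset.mem_range] at ht; omega, htv⟩
  -- the step at n - 1
  obtain ⟨t, hm⟩ : ∃ t, n - 1 = t + 1 := ⟨n - 2, by omega⟩
  have hne_p : gv G p (n-1) ≠ p := by
    rw [← gv_zero G p]
    exact (hinj' 0 (n-1) (by omega) (by omega) (by omega)).symm
  have hstep : G.Adj (gv G p (n-1)) (gv G p (n-1+1)) ∧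
      gv G p (n-1+1) ≠ (gpair G p (n-1)).1 := by
    rw [gv_succ]
    exact gnext_spec (exists_next (hpdeg2 _ hne_p) _)
  have hstep2 : gv G p (n-1+1) ≠ gv G p t := by
    have h2 := hstep.2
    rw [hm, gpair_fst] at h2
    rw [hm]
    exact h2
  obtain ⟨r, hr, hrv⟩ := hsurj (gv G p (n-1+1))
  have hrm : r ≠ n - 1 := by
    intro h
    rw [h] at hrv
    exact hstep.1.ne hrv
  have hrt : r ≠ t := by
    intro h
    rw [h] at hrv
    exact hstep2 hrv.symm
  have hradj : G.Adj (gv G p (n-1)) (gv G p r) := by rw [hrv]; exact hstep.1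
  have hr0 : r ≠ 0 := by
    intro h
    subst h
    have h1 : G.Adj (gv G p 0) (gv G p 1) := hadj 0 (by omega)
    have h2 : G.Adj (gv G p 0) (gv G p (n-1)) := hradj.symm
    have hne : gv G p 1 ≠ gv G p (n-1) := hinj' 1 (n-1) (by omega) (by omega) (by omega)
    have := two_le_degree_of_adj hne h1 h2
    rw [gv_zero, hp] at this
    omega
  obtain ⟨s, rfl⟩ : ∃ s, r = s + 1 := ⟨r - 1, by omega⟩
  -- r ≤ t - 1 = n - 3
  have hrle : s + 1 ≤ n - 3 := by omega
  have hq1 : gv G p (s+1) = q := by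
    by_contra hne
    have hd : G.degree (gv G p (s+1)) ≤ 2 := by
      by_cases hpp : gv G p (s+1) = p
      · rw [hpp, hp]; omega
      · rw [hother _ hpp hne]
    have ha1 : G.Adj (gv G p (s+1)) (gv G p s) := (hadj s (by omega)).symm
    have ha2 : G.Adj (gv G p (s+1)) (gv G p (s+2)) := hadj (s+1) (by omega)
    have ha3 : G.Adj (gv G p (s+1)) (gv G p (n-1)) := hradj.symm
    have := three_le_degree_of_adj
      (hinj' s (s+2) (by omega) (by omega) (by omega))
      (hinj' s (n-1) (by omega) (by omega) (by omega))
      (hinj' (s+2) (n-1) (by omega) (by omega) (by omega))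
      ha1 ha2 ha3
    omega
  refine ⟨s+1, by omega, by omega, hq1, hadj, hinj', hsurj, ?_⟩
  rw [← hq1]
  exact hradj



lemma gv_nbrs {V : Type*} [Fintype V] {G : SimpleGraph V}
    {p q : V} (hp : G.degree p = 1) (hq : G.degree q = 3)
    (hother : ∀ u, u ≠ p → u ≠ q → G.degree u = 2) (hcard : 4 ≤ Fintype.card V)
    {ℓ : ℕ} (hl1 : 1 ≤ ℓ) (hl3 : ℓ + 3 ≤ Fintype.card V) (hlq : gv G p ℓ = q)
    (hadj : ∀ j, j < Fintype.card V - 1 → G.Adj (gv G p j) (gv G p (j+1)))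
    (hinj' : ∀ a b, a ≠ b → a ≤ Fintype.card V - 1 → b ≤ Fintype.card V - 1 →
      gv G p a ≠ gv G p b)
    (hlast : G.Adj (gv G p (Fintype.card V - 1)) q) :
    (G.neighborFinset (gv G p 0) = {gv G p 1}) ∧
    (∀ s, s + 1 ≤ Fintype.card V - 2 → s + 1 ≠ ℓ →
      G.neighborFinset (gv G p (s+1)) = {gv G p s, gv G p (s+2)}) ∧
    (G.neighborFinset (gv G p ℓ) = {gv G p (ℓ-1), gv G p (ℓ+1), gv G p (Fintype.card V - 1)}) ∧
    (G.neighborFinset (gv G p (Fintype.card V - 1)) = {gv G p (Fintype.card V - 2), gv G p ℓ}) := by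
  set n := Fintype.card V with hn
  have hne_p : ∀ t, 1 ≤ t → t ≤ n-1 → gv G p t ≠ p := by
    intro t h1 h2
    rw [← gv_zero G p]
    exact (hinj' 0 t (by omega) (by omega) (by omega)).symm
  have hne_q : ∀ t, t ≤ n-1 → t ≠ ℓ → gv G p t ≠ q := by
    intro t h1 h2
    rw [← hlq]
    exact hinj' t ℓ h2 h1 (by omega)
  refine ⟨?_, ?_, ?_, ?_⟩
  · refine neighborFinset_eq ?_ ?_
    · rw [Finset.singleton_subset_iff, SimpleGraph.mem_neighborFinset]
      exact hadj 0 (by omega)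
    · rw [gv_zero, hp, Finset.card_singleton]
  · intro s h1 h2
    refine neighborFinset_eq ?_ ?_
    · intro x hx
      simp only [Finset.mem_insert, Finset.mem_singleton] at hx
      rw [SimpleGraph.mem_neighborFinset]
      rcases hx with rfl | rfl
      · exact (hadj s (by omega)).symm
      · exact hadj (s+1) (by omega)
    · rw [hother _ (hne_p (s+1) (by omega) (by omega)) (hne_q (s+1) (by omega) h2)]
      rw [Finset.card_insert_of_notMem, Finset.card_singleton]
      simp only [Finset.mem_singleton]
      exact hinj' s (s+2) (by omega) (by omega) (by omega)
  · obtain ⟨s, rfl⟩ : ∃ s, ℓ = s + 1 := ⟨ℓ - 1, by omega⟩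
    have he1 : s + 1 - 1 = s := by omega
    rw [he1]
    refine neighborFinset_eq ?_ ?_
    · intro x hx
      simp only [Finset.mem_insert, Finset.mem_singleton] at hx
      rw [SimpleGraph.mem_neighborFinset]
      rcases hx with rfl | rfl | rfl
      · exact (hadj s (by omega)).symm
      · exact hadj (s+1) (by omega)
      · exact (by rw [hlq]; exact hlast.symm)
    · rw [hlq, hq]
      rw [Finset.card_insert_of_notMem, Finset.card_insert_of_notMem,
        Finset.card_singleton]
      · simp only [Finset.mem_singleton]
        exact hinj' (s+2) (n-1) (by omega) (by omega) (by omega)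
      · simp only [Finset.mem_insert, Finset.mem_singleton]
        push_neg
        exact ⟨hinj' s (s+2) (by omega) (by omega) (by omega),
          hinj' s (n-1) (by omega) (by omega) (by omega)⟩
  · refine neighborFinset_eq ?_ ?_
    · intro x hx
      simp only [Finset.mem_insert, Finset.mem_singleton] at hx
      rw [SimpleGraph.mem_neighborFinset]
      rcases hx with rfl | rfl
      · have h3 := hadj (n-2) (by omega)
        have h4 : n - 2 + 1 = n - 1 := by omega
        rw [h4] at h3
        exact h3.symm
      · rw [hlq]; exact hlast
    · rw [hother _ (hne_p (n-1) (by omega) (by omega)) (hne_q (n-1) (by omega) (by omega))]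
      rw [Finset.card_insert_of_notMem, Finset.card_singleton]
      simp only [Finset.mem_singleton]
      exact hinj' (n-2) ℓ (by omega) (by omega) (by omega)


lemma induce_adj_iff {V : Type*} {G : SimpleGraph V} {T : Set V} {a b : ↥T} :
    (SimpleGraph.induce T G).Adj a b ↔ G.Adj a.1 b.1 := Iff.rfl



lemma gv_cut {V : Type*} [Fintype V] {G : SimpleGraph V}
    {p q : V} (hp : G.degree p = 1) (hq : G.degree q = 3) (hcard : 4 ≤ Fintype.card V)
    {ℓ : ℕ} (hl1 : 1 ≤ ℓ) (hl3 : ℓ + 3 ≤ Fintype.card V) (hlq : gv G p ℓ = q)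
    (hadj : ∀ j, j < Fintype.card V - 1 → G.Adj (gv G p j) (gv G p (j+1)))
    (hinj' : ∀ a b, a ≠ b → a ≤ Fintype.card V - 1 → b ≤ Fintype.card V - 1 →
      gv G p a ≠ gv G p b)
    (hsurj : ∀ v, ∃ t, t ≤ Fintype.card V - 1 ∧ gv G p t = v)
    (hlast : G.Adj (gv G p (Fintype.card V - 1)) q)
    (hN0 : G.neighborFinset (gv G p 0) = {gv G p 1})
    (hNmid : ∀ s, s + 1 ≤ Fintype.card V - 2 → s + 1 ≠ ℓ →
      G.neighborFinset (gv G p (s+1)) = {gv G p s, gv G p (s+2)}) :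
    {v : V | IsCutVertex G v} = (gv G p) '' (Set.Icc 1 ℓ) := by
  set n := Fintype.card V with hn
  apply Set.eq_of_subset_of_subset
  · -- every cut vertex is gv t with 1 ≤ t ≤ ℓ
    intro v hv
    obtain ⟨t, ht, rfl⟩ := hsurj v
    simp only [Set.mem_setOf_eq] at hv
    by_contra hmem
    have hnot : t = 0 ∨ (ℓ < t ∧ t ≤ n - 1) := by
      rcases Nat.eq_zero_or_pos t with h | h
      · exact Or.inl h
      · refine Or.inr ⟨?_, ht⟩
        by_contra hc
        exact hmem ⟨t, Set.mem_Icc.2 ⟨h, by omega⟩, rfl⟩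
    -- show the induced graph is connected
    apply hv
    set T : Set V := {u : V | u ≠ gv G p t} with hT
    -- hub index
    set hub : ℕ := if t = 0 then 1 else ℓ with hhub
    have hhubne : gv G p hub ≠ gv G p t := by
      rcases hnot with rfl | ⟨h1, h2⟩
      · simp only [hhub, if_pos rfl]
        exact hinj' 1 0 (by omega) (by omega) (by omega)
      · simp only [hhub, if_neg (by omega : ¬ t = 0)]
        exact hinj' ℓ t (by omega) (by omega) (by omega)
    set f : ℕ → ↥T := fun r => if h : gv G p r ≠ gv G p t then ⟨gv G p r, h⟩
      else ⟨gv G p hub, hhubne⟩ with hf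
    have hfval : ∀ r, gv G p r ≠ gv G p t → (f r).1 = gv G p r := by
      intro r h
      simp only [hf, dif_pos h]
    have hfadj : ∀ s, s < n - 1 → gv G p s ≠ gv G p t → gv G p (s+1) ≠ gv G p t →
        (SimpleGraph.induce T G).Adj (f s) (f (s+1)) := by
      intro s hs h1 h2
      rw [induce_adj_iff, hfval s h1, hfval (s+1) h2]
      exact hadj s hs
    have hreach : ∀ r, r ≤ n - 1 → r ≠ t → (SimpleGraph.induce T G).Reachable (f r) (f hub) := by
      intro r hr hrt
      have hgne : ∀ s, s ≤ n - 1 → s ≠ t → gv G p s ≠ gv G p t :=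
        fun s h1 h2 => hinj' s t h2 h1 ht
      rcases hnot with rfl | ⟨hlt, hle⟩
      · -- t = 0 : hub = 1, chain from 1 up to r
        have hub1 : hub = 1 := by rw [hhub, if_pos rfl]
        rw [hub1]
        have h1r : 1 ≤ r := by omega
        refine (chain_reachable f 1 r h1r ?_).symm
        intro s hs1 hsr
        exact hfadj s (by omega) (hgne s (by omega) (by omega)) (hgne (s+1) (by omega) (by omega))
      · -- ℓ < t
        have hubl : hub = ℓ := by rw [hhub, if_neg (by omega : ¬ t = 0)]
        rw [hubl]
        rcases Nat.lt_or_ge r t with hrlt | hrgt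
        · rcases le_or_gt r ℓ with hrl | hrl
          · -- chain from r up to ℓ
            refine chain_reachable f r ℓ hrl ?_
            intro s hs1 hs2
            exact hfadj s (by omega) (hgne s (by omega) (by omega))
              (hgne (s+1) (by omega) (by omega))
          · -- ℓ < r < t : chain from ℓ up to r, reversed
            refine (chain_reachable f ℓ r (by omega) ?_).symm
            intro s hs1 hs2
            exact hfadj s (by omega) (hgne s (by omega) (by omega))
              (hgne (s+1) (by omega) (by omega))
        · -- t < r : chain from r to n-1, then the closing edge to ℓ
          have h1 : (SimpleGraph.induce T G).Reachable (f r) (f (n-1)) := by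
            refine chain_reachable f r (n-1) (by omega) ?_
            intro s hs1 hs2
            exact hfadj s (by omega) (hgne s (by omega) (by omega))
              (hgne (s+1) (by omega) (by omega))
          have h2 : (SimpleGraph.induce T G).Adj (f (n-1)) (f ℓ) := by
            have hv1 : gv G p (n-1) ≠ gv G p t := hgne (n-1) (by omega) (by omega)
            have hv2 : gv G p ℓ ≠ gv G p t := hgne ℓ (by omega) (by omega)
            rw [induce_adj_iff, hfval (n-1) hv1, hfval ℓ hv2, hlq]
            exact hlast
          exact h1.trans h2.reachable
    rw [SimpleGraph.connected_iff]
    refine ⟨?_, ⟨⟨gv G p hub, hhubne⟩⟩⟩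
    · -- preconnected
      intro x y
      obtain ⟨rx, hrx, hrxv⟩ := hsurj x.1
      obtain ⟨ry, hry, hryv⟩ := hsurj y.1
      have hxt : rx ≠ t := by
        intro h; rw [h] at hrxv; exact x.2 hrxv.symm
      have hyt : ry ≠ t := by
        intro h; rw [h] at hryv; exact y.2 hryv.symm
      have hfx : f rx = x := by
        apply Subtype.ext
        rw [hfval rx (by rw [hrxv]; exact x.2), hrxv]
      have hfy : f ry = y := by
        apply Subtype.ext
        rw [hfval ry (by rw [hryv]; exact y.2), hryv]
      rw [← hfx, ← hfy]
      exact (hreach rx hrx hxt).trans (hreach ry hry hyt).symm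
  · -- every gv t with 1 ≤ t ≤ ℓ is a cut vertex
    rintro v ⟨t, htmem, rfl⟩
    rw [Set.mem_Icc] at htmem
    obtain ⟨ht1, htl⟩ := htmem
    simp only [Set.mem_setOf_eq, IsCutVertex]
    intro hconn'
    set T : Set V := {u : V | u ≠ gv G p t} with hT
    set S : Set ↥T := {x : ↥T | ∃ r, r < t ∧ gv G p r = x.1} with hS
    have hx0 : (⟨gv G p 0, hinj' 0 t (by omega) (by omega) (by omega)⟩ : ↥T) ∈ S :=
      ⟨0, by omega, rfl⟩
    have hclosed : ∀ ⦃x y : ↥T⦄, x ∈ S → (SimpleGraph.induce T G).Adj x y → y ∈ S := by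
      rintro ⟨u, hu⟩ ⟨w, hw⟩ ⟨r, hr, hrv⟩ hadj'
      rw [induce_adj_iff] at hadj'
      simp only at hrv hadj'
      rw [← hrv] at hadj'
      have hwmem : w ∈ G.neighborFinset (gv G p r) := by
        rwa [SimpleGraph.mem_neighborFinset]
      rcases Nat.eq_zero_or_pos r with rfl | hrpos
      · rw [hN0, Finset.mem_singleton] at hwmem
        subst hwmem
        have h1t : 1 ≠ t := by
          intro h; exact hw (by rw [← h])
        exact ⟨1, by omega, rfl⟩
      · obtain ⟨s, rfl⟩ : ∃ s, r = s + 1 := ⟨r - 1, by omega⟩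
        rw [hNmid s (by omega) (by omega)] at hwmem
        simp only [Finset.mem_insert, Finset.mem_singleton] at hwmem
        rcases hwmem with rfl | rfl
        · exact ⟨s, by omega, rfl⟩
        · have hs2t : s + 2 ≠ t := by
            intro h; exact hw (by rw [← h])
          exact ⟨s + 2, by omega, rfl⟩
    have hall := closed_eq_univ hconn' hx0 hclosed
    have hy := hall ⟨gv G p (n-1), hinj' (n-1) t (by omega) (by omega) (by omega)⟩
    obtain ⟨r, hr, hrv⟩ := hy
    simp only at hrv
    exact hinj' r (n-1) (by omega) (by omega) (by omega) hrv


lemma cnk_adj {n k : ℕ} (a b : Fin n) :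
    (cnk n k).Adj a b ↔ (((b:ℕ) = (a:ℕ) + 1 ∨ (a:ℕ) = (b:ℕ) + 1) ∨
      (((a:ℕ) = k ∧ (b:ℕ) = n - 1) ∨ ((b:ℕ) = k ∧ (a:ℕ) = n - 1))) ∧ a ≠ b := by
  rw [cnk, SimpleGraph.fromEdgeSet_adj]
  constructor
  · rintro ⟨hmem, hne⟩
    refine ⟨?_, hne⟩
    rcases hmem with ⟨i, j, hj, he⟩ | ⟨i, j, hi, hj, he⟩
    · rw [Sym2.eq_iff] at he
      rcases he with ⟨rfl, rfl⟩ | ⟨rfl, rfl⟩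
      · exact Or.inl (Or.inl hj)
      · exact Or.inl (Or.inr hj)
    · rw [Sym2.eq_iff] at he
      rcases he with ⟨rfl, rfl⟩ | ⟨rfl, rfl⟩
      · exact Or.inr (Or.inl ⟨hi, hj⟩)
      · exact Or.inr (Or.inr ⟨hi, hj⟩)
  · rintro ⟨hcond, hne⟩
    refine ⟨?_, hne⟩
    rcases hcond with (h | h) | (⟨h1, h2⟩ | ⟨h1, h2⟩)
    · exact Or.inl ⟨a, b, h, rfl⟩
    · exact Or.inl ⟨b, a, h, Sym2.eq_swap⟩
    · exact Or.inr ⟨a, b, h1, h2, rfl⟩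
    · exact Or.inr ⟨b, a, h1, h2, Sym2.eq_swap⟩

section
variable {n k : ℕ} (hk : 1 ≤ k) (hnk : k + 3 ≤ n)
include hk hnk

lemma cnk_nbr0 {a : Fin n} (ha : (a:ℕ) = 0) :
    (cnk n k).neighborFinset a = {(⟨1, by omega⟩ : Fin n)} := by
  ext b
  have hb := b.isLt
  simp only [SimpleGraph.mem_neighborFinset, cnk_adj, Finset.mem_singleton, Fin.ext_iff,
    ne_eq]
  omega

lemma cnk_nbrk {a : Fin n} (ha : (a:ℕ) = k) :
    (cnk n k).neighborFinset a =
      {(⟨k-1, by omega⟩ : Fin n), ⟨k+1, by omega⟩, ⟨n-1, by omega⟩} := by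
  ext b
  have hb := b.isLt
  simp only [SimpleGraph.mem_neighborFinset, cnk_adj, Finset.mem_insert, Finset.mem_singleton,
    Fin.ext_iff, ne_eq]
  omega

lemma cnk_nbrlast {a : Fin n} (ha : (a:ℕ) = n - 1) :
    (cnk n k).neighborFinset a = {(⟨n-2, by omega⟩ : Fin n), ⟨k, by omega⟩} := by
  ext b
  have hb := b.isLt
  simp only [SimpleGraph.mem_neighborFinset, cnk_adj, Finset.mem_insert, Finset.mem_singleton,
    Fin.ext_iff, ne_eq]
  omega

lemma cnk_nbrmid {a : Fin n} (h1 : 1 ≤ (a:ℕ)) (h2 : (a:ℕ) ≤ n - 2) (h3 : (a:ℕ) ≠ k) :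
    (cnk n k).neighborFinset a =
      {(⟨(a:ℕ)-1, by omega⟩ : Fin n), ⟨(a:ℕ)+1, by omega⟩} := by
  ext b
  have hb := b.isLt
  have ha := a.isLt
  simp only [SimpleGraph.mem_neighborFinset, cnk_adj, Finset.mem_insert, Finset.mem_singleton,
    Fin.ext_iff, ne_eq]
  omega

lemma cnk_deg0 {a : Fin n} (ha : (a:ℕ) = 0) : (cnk n k).degree a = 1 := by
  rw [← SimpleGraph.card_neighborFinset_eq_degree, cnk_nbr0 hk hnk ha, Finset.card_singleton]

lemma cnk_degk {a : Fin n} (ha : (a:ℕ) = k) : (cnk n k).degree a = 3 := by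
  rw [← SimpleGraph.card_neighborFinset_eq_degree, cnk_nbrk hk hnk ha]
  rw [Finset.card_insert_of_notMem, Finset.card_insert_of_notMem, Finset.card_singleton]
  · simp only [Finset.mem_singleton, Fin.ext_iff]; omega
  · simp only [Finset.mem_insert, Finset.mem_singleton, Fin.ext_iff]; push_neg; omega

lemma cnk_deglast {a : Fin n} (ha : (a:ℕ) = n - 1) : (cnk n k).degree a = 2 := by
  rw [← SimpleGraph.card_neighborFinset_eq_degree, cnk_nbrlast hk hnk ha]
  rw [Finset.card_insert_of_notMem, Finset.card_singleton]
  simp only [Finset.mem_singleton, Fin.ext_iff]; omega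

lemma cnk_degmid {a : Fin n} (h1 : 1 ≤ (a:ℕ)) (h2 : (a:ℕ) ≤ n - 2) (h3 : (a:ℕ) ≠ k) :
    (cnk n k).degree a = 2 := by
  rw [← SimpleGraph.card_neighborFinset_eq_degree, cnk_nbrmid hk hnk h1 h2 h3]
  rw [Finset.card_insert_of_notMem, Finset.card_singleton]
  simp only [Finset.mem_singleton, Fin.ext_iff]; omega

lemma cnk_zagreb : zagrebM1 (cnk n k) = 4 * n + 2 := by
  set x0 : Fin n := ⟨0, by omega⟩ with hx0
  set xk : Fin n := ⟨k, by omega⟩ with hxk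
  have hne : x0 ≠ xk := by rw [hx0, hxk, Ne, Fin.mk.injEq]; omega
  have hsub : ({x0, xk} : Finset (Fin n)) ⊆ Finset.univ := Finset.subset_univ _
  rw [zagrebM1]
  rw [← Finset.sum_sdiff hsub]
  have h1 : ∑ v ∈ ({x0, xk} : Finset (Fin n)), (cnk n k).degree v ^ 2 = 10 := by
    rw [Finset.sum_pair hne, cnk_deg0 hk hnk rfl, cnk_degk hk hnk rfl]
    norm_num
  have h2 : ∑ v ∈ Finset.univ \ ({x0, xk} : Finset (Fin n)), (cnk n k).degree v ^ 2 =
      4 * (n - 2) := by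
    rw [Finset.sum_congr rfl (g := fun _ => 4) ?_, Finset.sum_const, Finset.card_sdiff_of_subset hsub,
      Finset.card_univ, Fintype.card_fin]
    · rw [Finset.card_insert_of_notMem (by simpa using hne), Finset.card_singleton]
      ring
    · intro v hv
      rw [Finset.mem_sdiff, Finset.mem_insert, Finset.mem_singleton] at hv
      have hv0 : (v:ℕ) ≠ 0 := fun h => hv.2 (Or.inl (by rw [hx0, Fin.ext_iff]; exact h))
      have hvk : (v:ℕ) ≠ k := fun h => hv.2 (Or.inr (by rw [hxk, Fin.ext_iff]; exact h))
      have hvlt := v.isLt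
      by_cases hvl : (v:ℕ) = n - 1
      · rw [cnk_deglast hk hnk hvl]; norm_num
      · rw [cnk_degmid hk hnk (by omega) (by omega) hvk]; norm_num
  rw [h1, h2]
  omega

end


lemma zagreb_identity {V : Type*} [Fintype V] (G : SimpleGraph V) :
    (zagrebM1 G : ℤ) = (∑ v : V, ((G.degree v : ℤ) - 1) * ((G.degree v : ℤ) - 2))
      + 6 * G.edgeFinset.card - 2 * Fintype.card V := by
  have hsum : (∑ v : V, (G.degree v : ℤ)) = 2 * G.edgeFinset.card := by
    exact_mod_cast congrArg (Nat.cast : ℕ → ℤ) G.sum_degrees_eq_twice_card_edges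
  have h1 : ∀ v : V, ((G.degree v : ℤ) - 1) * ((G.degree v : ℤ) - 2)
      = (G.degree v : ℤ)^2 - 3 * (G.degree v : ℤ) + 2 := fun v => by ring
  rw [Finset.sum_congr rfl (fun v _ => h1 v)]
  have h2 : (zagrebM1 G : ℤ) = ∑ v : V, (G.degree v : ℤ)^2 := by
    rw [zagrebM1]; push_cast; rfl
  rw [h2, Finset.sum_add_distrib, Finset.sum_sub_distrib, ← Finset.mul_sum, hsum,
    Finset.sum_const, Finset.card_univ]
  push_cast
  ring

lemma term_nonneg (d : ℕ) : 0 ≤ ((d : ℤ) - 1) * ((d : ℤ) - 2) := by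
  rcases Nat.lt_or_ge d 2 with h | h
  · have : (d:ℤ) ≤ 1 := by exact_mod_cast Nat.lt_succ_iff.1 h
    nlinarith
  · have : (2:ℤ) ≤ d := by exact_mod_cast h
    apply mul_nonneg <;> omega

lemma term_ge_two (d : ℕ) (h : 3 ≤ d) : 2 ≤ ((d : ℤ) - 1) * ((d : ℤ) - 2) := by
  have : (3:ℤ) ≤ d := by exact_mod_cast h
  nlinarith

lemma Dsum_nonneg {V : Type*} [Fintype V] (G : SimpleGraph V) :
    0 ≤ ∑ v : V, ((G.degree v : ℤ) - 1) * ((G.degree v : ℤ) - 2) :=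
  Finset.sum_nonneg fun v _ => term_nonneg _

lemma exists_deg3 {V : Type*} [Fintype V] {G : SimpleGraph V} (hconn : G.Connected)
    (hcard4 : 4 ≤ Fintype.card V)
    (hm : G.edgeFinset.card = Fintype.card V)
    (hnotall : ¬ ∀ u : V, G.degree u = 2) : ∃ w, 3 ≤ G.degree w := by
  push_neg at hnotall
  obtain ⟨u, hu⟩ := hnotall
  rcases Nat.lt_or_ge (G.degree u) 3 with hlt | hge
  swap
  · exact ⟨u, hge⟩
  have hu1 : G.degree u = 1 := by
    have := one_le_degree hconn (by omega) u
    omega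
  by_contra hall
  push_neg at hall
  have hbound : ∑ v : V, G.degree v ≤ 1 + 2 * (Fintype.card V - 1) := by
    have hsplit : ∑ v : V, G.degree v
        = G.degree u + ∑ v ∈ Finset.univ.erase u, G.degree v := by
      rw [← Finset.sum_erase_add Finset.univ _ (Finset.mem_univ u)]; ring
    have hrest : ∑ v ∈ Finset.univ.erase u, G.degree v ≤ 2 * (Fintype.card V - 1) := by
      calc ∑ v ∈ Finset.univ.erase u, G.degree v ≤ ∑ _v ∈ Finset.univ.erase u, 2 :=
        Finset.sum_le_sum fun v _ => by have := hall v; omega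
      _ = 2 * (Fintype.card V - 1) := by
        rw [Finset.sum_const, Finset.card_erase_of_mem (Finset.mem_univ u),
          Finset.card_univ, smul_eq_mul]
        ring
    omega
  rw [G.sum_degrees_eq_twice_card_edges, hm] at hbound
  omega

lemma extract_degrees {V : Type*} [Fintype V] {G : SimpleGraph V} (hconn : G.Connected)
    (hcard4 : 4 ≤ Fintype.card V)
    (hm : G.edgeFinset.card = Fintype.card V)
    (hq3 : ∃ w, 3 ≤ G.degree w)
    (hD : ∑ v : V, ((G.degree v : ℤ) - 1) * ((G.degree v : ℤ) - 2) = 2) :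
    ∃ p q : V, G.degree p = 1 ∧ G.degree q = 3 ∧
      ∀ u, u ≠ p → u ≠ q → G.degree u = 2 := by
  obtain ⟨w, hw⟩ := hq3
  -- all terms other than w vanish and term w = 2
  have hsplit : ∑ v : V, ((G.degree v : ℤ) - 1) * ((G.degree v : ℤ) - 2)
      = ((G.degree w : ℤ) - 1) * ((G.degree w : ℤ) - 2)
        + ∑ v ∈ Finset.univ.erase w, ((G.degree v : ℤ) - 1) * ((G.degree v : ℤ) - 2) := by
    rw [← Finset.sum_erase_add Finset.univ _ (Finset.mem_univ w)]; ring
  have hrest_nonneg : 0 ≤ ∑ v ∈ Finset.univ.erase w,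
      ((G.degree v : ℤ) - 1) * ((G.degree v : ℤ) - 2) :=
    Finset.sum_nonneg fun v _ => term_nonneg _
  have hterm2 := term_ge_two (G.degree w) hw
  have hrest0 : ∑ v ∈ Finset.univ.erase w,
      ((G.degree v : ℤ) - 1) * ((G.degree v : ℤ) - 2) = 0 := by omega
  have hw3 : G.degree w = 3 := by
    by_contra h
    have h4 : 4 ≤ G.degree w := by omega
    have : (4:ℤ) ≤ G.degree w := by exact_mod_cast h4
    nlinarith [hsplit, hrest0, hD]
  have hzero : ∀ v ∈ Finset.univ.erase w,
      ((G.degree v : ℤ) - 1) * ((G.degree v : ℤ) - 2) = 0 := by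
    intro v hv
    have := Finset.sum_eq_zero_iff_of_nonneg (fun v _ => term_nonneg (G.degree v)) |>.1 hrest0
    exact this v hv
  have hdeg12 : ∀ v, v ≠ w → G.degree v = 1 ∨ G.degree v = 2 := by
    intro v hv
    have h := hzero v (Finset.mem_erase.2 ⟨hv, Finset.mem_univ v⟩)
    rcases mul_eq_zero.1 h with h1 | h1
    · left; have : (G.degree v : ℤ) = 1 := by omega
      exact_mod_cast this
    · right; have : (G.degree v : ℤ) = 2 := by omega
      exact_mod_cast this
  -- count degree-1 vertices
  have hsum : ∑ v : V, G.degree v = 2 * Fintype.card V := by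
    rw [G.sum_degrees_eq_twice_card_edges, hm]
  set t : Finset V := (Finset.univ.erase w).filter (fun v => G.degree v = 1) with ht
  have htcard : (t.card : ℤ) = ∑ v ∈ Finset.univ.erase w, ((2:ℤ) - G.degree v) := by
    rw [Finset.sum_congr rfl
      (g := fun v => if G.degree v = 1 then (1:ℤ) else 0) ?_]
    · rw [Finset.sum_ite, Finset.sum_const, Finset.sum_const]
      simp [ht]
    · intro v hv
      rw [Finset.mem_erase] at hv
      rcases hdeg12 v hv.1 with h | h <;> simp [h]
  have hsum_erase : ∑ v ∈ Finset.univ.erase w, (G.degree v : ℤ)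
      = 2 * Fintype.card V - 3 := by
    have : ∑ v : V, (G.degree v : ℤ) = 2 * Fintype.card V := by exact_mod_cast hsum
    rw [← Finset.sum_erase_add Finset.univ _ (Finset.mem_univ w), hw3] at this
    push_cast at this
    omega
  have htc1 : t.card = 1 := by
    have h1 : (t.card : ℤ) = 2 * ((Fintype.card V : ℤ) - 1) - (2 * (Fintype.card V:ℤ) - 3) := by
      rw [htcard, Finset.sum_sub_distrib, hsum_erase, Finset.sum_const,
        Finset.card_erase_of_mem (Finset.mem_univ w), Finset.card_univ]
      rw [nsmul_eq_mul, Nat.cast_sub (show 1 ≤ Fintype.card V by omega)]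
      push_cast
      ring
    omega
  obtain ⟨p, hp⟩ := Finset.card_eq_one.1 htc1
  have hpmem : p ∈ t := by rw [hp]; exact Finset.mem_singleton_self p
  rw [ht, Finset.mem_filter, Finset.mem_erase] at hpmem
  refine ⟨p, w, hpmem.2, hw3, ?_⟩
  intro u hup huw
  rcases hdeg12 u huw with h | h
  · exfalso
    have : u ∈ t := by
      rw [ht, Finset.mem_filter, Finset.mem_erase]
      exact ⟨⟨huw, Finset.mem_univ u⟩, h⟩
    rw [hp, Finset.mem_singleton] at this
    exact hup this
  · exact h


lemma zagreb_iso {V W : Type*} [Fintype V] [Fintype W] {G : SimpleGraph V}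
    {H : SimpleGraph W} (e : G ≃g H) : zagrebM1 G = zagrebM1 H := by
  rw [zagrebM1, zagrebM1]
  rw [← Equiv.sum_comp e.toEquiv (fun w => H.degree w ^ 2)]
  apply Finset.sum_congr rfl
  intro v _
  have : H.degree (e.toEquiv v) = G.degree v := by
    rw [← SimpleGraph.card_neighborSet_eq_degree, ← SimpleGraph.card_neighborSet_eq_degree]
    exact (Fintype.card_congr (e.mapNeighborSet v)).symm
  rw [this]



lemma gv_iso {V : Type*} [Fintype V] {G : SimpleGraph V} {p q : V} {n ℓ : ℕ}
    (hn : Fintype.card V = n) (hcard : 4 ≤ n)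
    (hl1 : 1 ≤ ℓ) (hl3 : ℓ + 3 ≤ n) (hlq : gv G p ℓ = q)
    (hadj : ∀ j, j < n - 1 → G.Adj (gv G p j) (gv G p (j+1)))
    (hinj' : ∀ a b, a ≠ b → a ≤ n-1 → b ≤ n-1 → gv G p a ≠ gv G p b)
    (hlast : G.Adj (gv G p (n-1)) q)
    (hN0 : G.neighborFinset (gv G p 0) = {gv G p 1})
    (hNmid : ∀ s, s + 1 ≤ n - 2 → s + 1 ≠ ℓ →
      G.neighborFinset (gv G p (s+1)) = {gv G p s, gv G p (s+2)})
    (hNl : G.neighborFinset (gv G p ℓ) = {gv G p (ℓ-1), gv G p (ℓ+1), gv G p (n-1)})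
    (hNlast : G.neighborFinset (gv G p (n-1)) = {gv G p (n-2), gv G p ℓ}) :
    Nonempty (G ≃g cnk n ℓ) := by
  have hidx : ∀ a b, a ≤ n-1 → b ≤ n-1 → gv G p a = gv G p b → a = b := by
    intro a b ha hb h
    by_contra hne
    exact hinj' a b hne ha hb h
  set f : Fin n → V := fun i => gv G p (i : ℕ) with hf
  have hbij : Function.Bijective f := by
    rw [Fintype.bijective_iff_injective_and_card, Fintype.card_fin, hn]
    refine ⟨?_, rfl⟩
    intro i j hij
    have hi := i.isLt
    have hj := j.isLt
    exact Fin.ext (hidx _ _ (by omega) (by omega) hij)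
  set e : Fin n ≃ V := Equiv.ofBijective f hbij with he
  have hev : ∀ i : Fin n, e i = gv G p (i : ℕ) := fun i => rfl
  -- the map_rel_iff
  have hrel : ∀ i j : Fin n, G.Adj (e i) (e j) ↔ (cnk n ℓ).Adj i j := by
    intro i j
    rw [hev, hev, cnk_adj]
    have hi := i.isLt
    have hj := j.isLt
    constructor
    · intro hGadj
      have hne : i ≠ j := by
        intro h
        rw [h] at hGadj
        exact hGadj.ne rfl
      refine ⟨?_, hne⟩
      have hmem : gv G p (j:ℕ) ∈ G.neighborFinset (gv G p (i:ℕ)) := by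
        rwa [SimpleGraph.mem_neighborFinset]
      -- case on the position of i
      rcases Nat.eq_zero_or_pos (i:ℕ) with hi0 | hipos
      · rw [hi0] at hmem
        rw [hN0, Finset.mem_singleton] at hmem
        have : (j:ℕ) = 1 := hidx _ _ (by omega) (by omega) hmem
        left; left; omega
      by_cases hil : (i:ℕ) = ℓ
      · rw [hil, hNl] at hmem
        simp only [Finset.mem_insert, Finset.mem_singleton] at hmem
        rcases hmem with h | h | h
        · have : (j:ℕ) = ℓ-1 := hidx _ _ (by omega) (by omega) h
          left; right; omega
        · have : (j:ℕ) = ℓ+1 := hidx _ _ (by omega) (by omega) h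
          left; left; omega
        · have : (j:ℕ) = n-1 := hidx _ _ (by omega) (by omega) h
          right; left; exact ⟨hil, this⟩
      by_cases hilast : (i:ℕ) = n-1
      · rw [hilast, hNlast] at hmem
        simp only [Finset.mem_insert, Finset.mem_singleton] at hmem
        rcases hmem with h | h
        · have : (j:ℕ) = n-2 := hidx _ _ (by omega) (by omega) h
          left; right; omega
        · have : (j:ℕ) = ℓ := hidx _ _ (by omega) (by omega) h
          right; right; exact ⟨this, hilast⟩
      · obtain ⟨s, hs⟩ : ∃ s, (i:ℕ) = s + 1 := ⟨(i:ℕ) - 1, by omega⟩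
        rw [hs] at hmem
        rw [hNmid s (by omega) (by omega)] at hmem
        simp only [Finset.mem_insert, Finset.mem_singleton] at hmem
        rcases hmem with h | h
        · have : (j:ℕ) = s := hidx _ _ (by omega) (by omega) h
          left; right; omega
        · have : (j:ℕ) = s+2 := hidx _ _ (by omega) (by omega) h
          left; left; omega
    · rintro ⟨hcond, hne⟩
      rcases hcond with (h | h) | (⟨h1, h2⟩ | ⟨h1, h2⟩)
      · have := hadj (i:ℕ) (by omega)
        rwa [← h] at this
      · have := hadj (j:ℕ) (by omega)
        rw [← h] at this
        exact this.symm
      · rw [h1, h2, hlq]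
        exact hlast.symm
      · rw [h1, h2, hlq]
        exact hlast
  refine ⟨⟨e.symm, ?_⟩⟩
  intro a b
  have h := hrel (e.symm a) (e.symm b)
  rw [Equiv.apply_symm_apply, Equiv.apply_symm_apply] at h
  exact h.symm


/-- For `k ≥ 1`, `n - k ≥ 3` and `G ∈ 𝕍_{n,k}`, the first Zagreb index satisfies
`M₁(G) ≥ 4n + 2`, with equality if and only if `G ≅ C_{n,k}`. -/
theorem M1_lower_bound {V : Type*} [Fintype V] (n k : ℕ)
    (hk : 1 ≤ k) (hnk : 3 ≤ n - k) (hcard : Fintype.card V = n)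
    (G : SimpleGraph V) (hG : MemVnk G k) :
    4 * n + 2 ≤ zagrebM1 G ∧
      (zagrebM1 G = 4 * n + 2 ↔ Nonempty (G ≃g cnk n k)) := by
  obtain ⟨hconn, hcut, x, c, hcyc⟩ := hG
  have hkn : k + 3 ≤ n := by omega
  have hc4 : 4 ≤ Fintype.card V := by omega
  have hm := card_le_edges hconn hcyc
  -- there is a cut vertex
  have hcutne : {v : V | IsCutVertex G v}.Nonempty := by
    apply Set.nonempty_of_ncard_ne_zero
    rw [hcut]
    omega
  obtain ⟨c0, hc0⟩ := hcutne
  have hnotall : ¬ ∀ u : V, G.degree u = 2 := not_all_deg_two hconn (by omega) hc0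
  have hid := zagreb_identity G
  have hDnn := Dsum_nonneg G
  set m := G.edgeFinset.card with hmdef
  set D := ∑ v : V, ((G.degree v : ℤ) - 1) * ((G.degree v : ℤ) - 2) with hDdef
  rcases Nat.lt_or_ge (Fintype.card V) m with hgt | hge
  · -- strictly more edges than vertices: M1 ≥ 4n + 6
    have hcast : ((Fintype.card V : ℤ)) < m := by exact_mod_cast hgt
    have hz : (4 * (n:ℤ) + 6) ≤ (zagrebM1 G : ℤ) := by
      rw [hid, hcard]
      have : ((n:ℤ)) < m := by rw [← hcard]; exact hcast
      omega
    have hz2 : 4 * n + 6 ≤ zagrebM1 G := by exact_mod_cast hz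
    refine ⟨by omega, ?_, ?_⟩
    · intro hzeq
      omega
    · rintro ⟨e⟩
      exfalso
      have := zagreb_iso e
      rw [cnk_zagreb hk hkn] at this
      omega
  · -- unicyclic case : m = n
    have hmn : m = Fintype.card V := le_antisymm hge hm
    obtain ⟨w3, hw3⟩ := exists_deg3 hconn hc4 hmn hnotall
    have hterm := term_ge_two _ hw3
    have hD2 : 2 ≤ D := by
      rw [hDdef]
      calc (2:ℤ) ≤ ((G.degree w3 : ℤ) - 1) * ((G.degree w3 : ℤ) - 2) := hterm
      _ ≤ _ := Finset.single_le_sum (fun v _ => term_nonneg (G.degree v)) (Finset.mem_univ w3)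
    have hmcast : (m:ℤ) = (Fintype.card V : ℤ) := by exact_mod_cast hmn
    have hzlow : (4 * (n:ℤ) + 2) ≤ (zagrebM1 G : ℤ) := by
      rw [hid, hcard]
      rw [hcard] at hmcast
      omega
    have hzlow2 : 4 * n + 2 ≤ zagrebM1 G := by exact_mod_cast hzlow
    refine ⟨hzlow2, ?_, ?_⟩
    · intro hzeq
      -- equality: extract the degree sequence
      have hzcast : (zagrebM1 G : ℤ) = 4 * (n:ℤ) + 2 := by exact_mod_cast hzeq
      have hD2' : D = 2 := by
        rw [hid, hcard] at hzcast
        rw [hcard] at hmcast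
        omega
      rw [hDdef] at hD2'
      obtain ⟨p, q, hp, hq, hother⟩ := extract_degrees hconn hc4 hmn ⟨w3, hw3⟩ hD2'
      obtain ⟨ℓ, hl1, hl3, hlq, hadj, hinj', hsurj, hlast⟩ :=
        gv_struct hconn hp hq hother hc4
      obtain ⟨hN0, hNmid, hNl, hNlast⟩ :=
        gv_nbrs hp hq hother hc4 hl1 hl3 hlq hadj hinj' hlast
      have hcutset := gv_cut hp hq hc4 hl1 hl3 hlq hadj hinj' hsurj hlast hN0 hNmid
      have hlk : ℓ = k := by
        rw [hcutset] at hcut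
        rw [Set.ncard_image_of_injOn ?_] at hcut
        · rw [← Finset.coe_Icc, Set.ncard_coe_finset, Nat.card_Icc] at hcut
          omega
        · intro a ha b hb hab
          rw [Set.mem_Icc] at ha hb
          by_contra hne
          exact hinj' a b hne (by omega) (by omega) hab
      subst hlk
      rw [hcard] at hl3 hadj hinj' hlast hNmid hNl hNlast
      exact gv_iso hcard (by omega) hl1 hl3 hlq hadj hinj' hlast hN0 hNmid hNl hNlast
    · rintro ⟨e⟩
      rw [zagreb_iso e, cnk_zagreb hk hkn]
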